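/- Assume G satisfies the U-Hypothesis with respect to ℕ, set U := {n ∈ ℕ : n⁻¹ ∈ ℕ}, and assume in addition that D is finite-dimensional as a vector space over its center F. Then the image of N in G/U is contained in the center of G/U; equivalently, for all g ∈ G and n ∈ N, the commutator g⁻¹n⁻¹gn lies in U. -/

import Mathlib

open scoped Pointwise

/-- The subset of `D` consisting of (the values of) the units belonging to `N`. -/
def unitsSet {D : Type*} [DivisionRing D] (N : Subgroup Dˣ) : Set D :=
  Units.val '' (N : Set Dˣ)

/-- For `a : D`, the set `N(a) = {n ∈ N : a + n ∈ N}`. -/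
def nSet {D : Type*} [DivisionRing D] (N : Subgroup Dˣ) (a : D) : Set D :=
  {x : D | x ∈ unitsSet N ∧ a + x ∈ unitsSet N}

/-- The commuting graph of a group: vertices are the nonidentity elements,
two distinct nonidentity elements are adjacent iff they commute. (The identity is
an isolated vertex.) -/
def commGraph (Q : Type*) [Group Q] : SimpleGraph Q where
  Adj a b := a ≠ b ∧ a ≠ 1 ∧ b ≠ 1 ∧ a * b = b * a
  symm := by
    refine ⟨fun a b h => ?_⟩
    exact ⟨Ne.symm h.1, h.2.2.1, h.2.1, h.2.2.2.symm⟩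
  loopless := by exact ⟨fun a h => h.1 rfl⟩

/-- `distGT Γ u v k` : there is no path (walk) of length at most `k` from `u` to `v`,
i.e. `d(u,v) > k`. -/
def distGT {Q : Type*} (Γ : SimpleGraph Q) (u v : Q) (k : ℕ) : Prop :=
  ∀ p : Γ.Walk u v, k < p.length

/-- `G` satisfies the *U-Hypothesis* with respect to `S`: `S` is a conjugation-invariant
subset of `G` with `∅ ≠ S ⊊ N` such that (U1) `1, −1 ∈ S`; (U2) `S·S = S`;
(U3) for all `n̄ ∈ N∖S`, `n̄ + 1 ∈ S` and `n̄ − 1 ∈ N`. -/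
def UHyp {D : Type*} [DivisionRing D] (N : Subgroup Dˣ) (S : Set D) : Prop :=
  (∀ g : Dˣ, (fun t => (g : D)⁻¹ * t * (g : D)) '' S = S) ∧
  S.Nonempty ∧ S ⊂ unitsSet N ∧
  (1 : D) ∈ S ∧ (-1 : D) ∈ S ∧
  S * S = S ∧
  (∀ t ∈ unitsSet N \ S, t + 1 ∈ S ∧ t - 1 ∈ unitsSet N)

section Stmt18Aux

variable {D : Type*} [DivisionRing D] {N : Subgroup Dˣ} {S : Set D}

lemma Stmt18.mem_unitsSet {m : Dˣ} (hm : m ∈ N) : (m : D) ∈ unitsSet N := ⟨m, hm, rfl⟩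

lemma Stmt18.exists_unit {a : D} (ha : a ∈ unitsSet N) :
    ∃ m : Dˣ, m ∈ N ∧ (m : D) = a := by
  obtain ⟨m, hm, rfl⟩ := ha; exact ⟨m, hm, rfl⟩

lemma Stmt18.us_ne_zero {a : D} (ha : a ∈ unitsSet N) : a ≠ 0 := by
  obtain ⟨m, hm, rfl⟩ := ha; exact m.ne_zero

lemma Stmt18.us_inv {a : D} (ha : a ∈ unitsSet N) : a⁻¹ ∈ unitsSet N := by
  obtain ⟨m, hm, rfl⟩ := ha
  exact ⟨m⁻¹, inv_mem hm, Units.val_inv_eq_inv_val m⟩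

lemma Stmt18.us_mul {a b : D} (ha : a ∈ unitsSet N) (hb : b ∈ unitsSet N) :
    a * b ∈ unitsSet N := by
  obtain ⟨m, hm, rfl⟩ := ha; obtain ⟨m', hm', rfl⟩ := hb
  exact ⟨m * m', mul_mem hm hm', rfl⟩

/-- a generic minimum-existence lemma for total transitive relations. -/
lemma Stmt18.exists_min (R : ℕ → ℕ → Prop) (htot : ∀ i j, R i j ∨ R j i)
    (htrans : ∀ i j k, R i j → R j k → R i k) (s : Finset ℕ) (hs : s.Nonempty) :
    ∃ i ∈ s, ∀ j ∈ s, R i j := by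
  classical
  induction s using Finset.cons_induction with
  | empty => exact absurd hs (by simp)
  | cons a s ha ih =>
    have hRaa : R a a := (htot a a).elim id id
    by_cases hs' : s.Nonempty
    · obtain ⟨i, hi, hall⟩ := ih hs'
      rcases htot a i with h | h
      · refine ⟨a, Finset.mem_cons_self a s, ?_⟩
        intro j hj
        rcases Finset.mem_cons.mp hj with rfl | hj
        · exact hRaa
        · exact htrans a i j h (hall j hj)
      · refine ⟨i, Finset.mem_cons_of_mem hi, ?_⟩
        intro j hj
        rcases Finset.mem_cons.mp hj with rfl | hj
        · exact h
        · exact hall j hj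
    · have hse : s = ∅ := Finset.not_nonempty_iff_eq_empty.mp hs'
      refine ⟨a, Finset.mem_cons_self a s, ?_⟩
      intro j hj
      rcases Finset.mem_cons.mp hj with rfl | hj
      · exact hRaa
      · exact absurd hj (by simp [hse])

end Stmt18Aux

/-- Under the U-Hypothesis, with `U = {n ∈ S : n⁻¹ ∈ S}`, if
`D` is finite dimensional over its center `F`, then the image of `N` in `G/U`
is central: for all `g ∈ G` and `n ∈ N`, the commutator `g⁻¹n⁻¹gn ∈ U`. -/
theorem stmt_18 {D : Type*} [DivisionRing D] [Infinite D] (N : Subgroup Dˣ)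
    [N.Normal] (hF : ∀ x : Dˣ, (x : D) ∈ Set.center D → x ∈ N)
    (hfin : Finite (Dˣ ⧸ N))
    (S : Set D) (hS : UHyp N S)
    [FiniteDimensional (Subring.center D) D] :
    ∀ g : Dˣ, ∀ n : Dˣ, n ∈ N →
      ((g⁻¹ * n⁻¹ * g * n : Dˣ) : D) ∈ {t : D | t ∈ S ∧ t⁻¹ ∈ S} := by
  classical
  obtain ⟨hconj, -, hsub, h1S, hm1S, hmulS, hU3⟩ := hS
  set T : Set D := unitsSet N \ S with hTdef
  set U : Set D := {t : D | t ∈ S ∧ t⁻¹ ∈ S} with hUdef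
  have hSsub : S ⊆ unitsSet N := hsub.subset
  have hS0 : ∀ {a : D}, a ∈ S → a ≠ 0 := fun ha => Stmt18.us_ne_zero (hSsub ha)
  have hSmul : ∀ {a b : D}, a ∈ S → b ∈ S → a * b ∈ S := by
    intro a b ha hb
    have := Set.mul_mem_mul ha hb
    rwa [hmulS] at this
  have hSneg : ∀ {a : D}, a ∈ S → -a ∈ S := by
    intro a ha
    have := hSmul hm1S ha
    rwa [neg_one_mul] at this
  -- U basics
  have hUS : U ⊆ S := fun a ha => ha.1
  have hU1 : (1 : D) ∈ U := ⟨h1S, by rw [inv_one]; exact h1S⟩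
  have hUinv : ∀ {a : D}, a ∈ U → a⁻¹ ∈ U := by
    intro a ha
    exact ⟨ha.2, by rw [inv_inv]; exact ha.1⟩
  have hUmul : ∀ {a b : D}, a ∈ U → b ∈ U → a * b ∈ U := by
    intro a b ha hb
    refine ⟨hSmul ha.1 hb.1, ?_⟩
    rw [mul_inv_rev]
    exact hSmul hb.2 ha.2
  have hUneg : ∀ {a : D}, a ∈ U → -a ∈ U := by
    intro a ha
    refine ⟨hSneg ha.1, ?_⟩
    rw [inv_neg]
    exact hSneg ha.2
  -- T basics
  have hT1 : ∀ {t : D}, t ∈ T → t + 1 ∈ S := fun ht => (hU3 _ ht).1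
  have hT1' : ∀ {t : D}, t ∈ T → t - 1 ∈ S := by
    intro t ht
    have h2 := (hU3 _ ht).2
    by_contra hns
    have : (t - 1) + 1 ∈ S := hT1 ⟨h2, hns⟩
    rw [sub_add_cancel] at this
    exact ht.2 this
  have hTneg : ∀ {t : D}, t ∈ T → -t ∈ T := by
    intro t ht
    refine ⟨?_, ?_⟩
    · have := Stmt18.us_mul (hSsub hm1S) ht.1
      rwa [neg_one_mul] at this
    · intro hmem
      have := hSmul hm1S hmem
      rw [neg_one_mul, neg_neg] at this
      exact ht.2 this
  -- t ∈ T → t + 1 ∈ U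
  have hT1U : ∀ {t : D}, t ∈ T → t + 1 ∈ U := by
    intro t ht
    have hs : t + 1 ∈ S := hT1 ht
    refine ⟨hs, ?_⟩
    by_contra hns
    have hsTinv : (t + 1)⁻¹ ∈ T := ⟨Stmt18.us_inv (hSsub hs), hns⟩
    have h1 : (t + 1)⁻¹ - 1 ∈ S := hT1' hsTinv
    have h2 : -((t + 1)⁻¹ - 1) ∈ S := hSneg h1
    have h3 : -((t + 1)⁻¹ - 1) * (t + 1) ∈ S := hSmul h2 hs
    have hne : (t + 1) ≠ 0 := hS0 hs
    have heq : -((t + 1)⁻¹ - 1) * (t + 1) = t := by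
      rw [neg_sub, sub_mul, one_mul, inv_mul_cancel₀ hne, add_sub_cancel_right]
    rw [heq] at h3
    exact ht.2 h3
  have hT1U' : ∀ {t : D}, t ∈ T → t - 1 ∈ U := by
    intro t ht
    have := hUneg (hT1U (hTneg ht))
    rwa [neg_add, neg_neg, ← sub_eq_add_neg] at this
  have hUTmul : ∀ {u t : D}, u ∈ U → t ∈ T → u * t ∈ T := by
    intro u t hu ht
    refine ⟨Stmt18.us_mul (hSsub (hUS hu)) ht.1, ?_⟩
    intro hmem
    have h2 : u⁻¹ * (u * t) ∈ S := hSmul (hUinv hu).1 hmem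
    rw [inv_mul_cancel_left₀ (hS0 (hUS hu))] at h2
    exact ht.2 h2
  have hTU_add : ∀ {t u : D}, t ∈ T → u ∈ U → t + u ∈ U := by
    intro t u ht hu
    have h1 : u⁻¹ * t ∈ T := hUTmul (hUinv hu) ht
    have h2 : u⁻¹ * t + 1 ∈ U := hT1U h1
    have h3 : u * (u⁻¹ * t + 1) ∈ U := hUmul hu h2
    have heq : u * (u⁻¹ * t + 1) = t + u := by
      rw [mul_add, mul_one, mul_inv_cancel_left₀ (hS0 (hUS hu))]
    rwa [heq] at h3
  -- no t with t, t⁻¹ ∈ T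
  have hTTinv : ∀ {t : D}, t ∈ T → t⁻¹ ∈ T → False := by
    intro t ht hti
    have hne : t ≠ 0 := Stmt18.us_ne_zero ht.1
    have hu1 : t - 1 ∈ U := hT1U' ht
    have hu2 : t⁻¹ + 1 ∈ U := hT1U hti
    have hb : (t - 1) * (t⁻¹ + 1) ∈ U := hUmul hu1 hu2
    have heq : (t - 1) * (t⁻¹ + 1) = t - t⁻¹ := by
      rw [mul_add, mul_one, sub_mul, one_mul, mul_inv_cancel₀ hne]
      abel
    rw [heq] at hb
    have : t⁻¹ + (t - t⁻¹) ∈ U := hTU_add hti hb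
    rw [add_sub_cancel] at this
    exact ht.2 (hUS this)
  have hTinvS : ∀ {t : D}, t ∈ T → t⁻¹ ∈ S := by
    intro t ht
    by_contra hns
    exact hTTinv ht ⟨Stmt18.us_inv ht.1, hns⟩
  have hTTmul : ∀ {t t' : D}, t ∈ T → t' ∈ T → t * t' ∈ T := by
    intro t t' ht ht'
    refine ⟨Stmt18.us_mul ht.1 ht'.1, ?_⟩
    intro hmem
    have h2 : (t * t') * t'⁻¹ ∈ S := hSmul hmem (hTinvS ht')
    rw [mul_inv_cancel_right₀ (Stmt18.us_ne_zero ht'.1)] at h2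
    exact ht.2 h2
  have hUTclosed : ∀ {a b : D}, a ∈ U ∪ T → b ∈ U ∪ T → a * b ∈ U ∪ T := by
    intro a b ha hb
    rcases ha with ha | ha <;> rcases hb with hb | hb
    · exact Or.inl (hUmul ha hb)
    · exact Or.inr (hUTmul ha hb)
    · exact Or.inr (by
        refine ⟨Stmt18.us_mul ha.1 (hSsub (hUS hb)), ?_⟩
        intro hmem
        have h2 : (a * b) * b⁻¹ ∈ S := hSmul hmem (hUinv hb).1
        rw [mul_inv_cancel_right₀ (hS0 (hUS hb))] at h2
        exact ha.2 h2)
    · exact Or.inr (hTTmul ha hb)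
  -- trichotomy
  have htri : ∀ {a : D}, a ∈ unitsSet N → a ∈ U ∨ a ∈ T ∨ a⁻¹ ∈ T := by
    intro a ha
    by_cases haS : a ∈ S
    · by_cases haiS : a⁻¹ ∈ S
      · exact Or.inl ⟨haS, haiS⟩
      · exact Or.inr (Or.inr ⟨Stmt18.us_inv ha, haiS⟩)
    · exact Or.inr (Or.inl ⟨ha, haS⟩)
  -- conjugation (unit level)
  have hval3 : ∀ (w v : Dˣ), ((w⁻¹ * v * w : Dˣ) : D) = ((w : D))⁻¹ * (v : D) * (w : D) := by
    intro w v
    push_cast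
    rfl
  have hconjSu : ∀ (g v : Dˣ), ((v : Dˣ) : D) ∈ S → ((g⁻¹ * v * g : Dˣ) : D) ∈ S := by
    intro g v hv
    rw [hval3]
    rw [← hconj g]
    exact ⟨(v : D), hv, rfl⟩
  have hconjuNu : ∀ (g v : Dˣ), v ∈ N → (g⁻¹ * v * g) ∈ N := by
    intro g v hv
    have := (inferInstance : N.Normal).conj_mem v hv g⁻¹
    rwa [inv_inv] at this
  have hmemN_of_val : ∀ {v : Dˣ}, ((v : Dˣ) : D) ∈ unitsSet N → v ∈ N := by
    intro v hv
    obtain ⟨m, hm, hmv⟩ := Stmt18.exists_unit hv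
    have : m = v := Units.ext hmv
    rwa [this] at hm
  have hconjTu : ∀ (g v : Dˣ), ((v : Dˣ) : D) ∈ T → ((g⁻¹ * v * g : Dˣ) : D) ∈ T := by
    intro g v hv
    refine ⟨Stmt18.mem_unitsSet (hconjuNu g v (hmemN_of_val hv.1)), ?_⟩
    intro hmem
    have h2 := hconjSu g⁻¹ _ hmem
    rw [show g⁻¹⁻¹ * (g⁻¹ * v * g) * g⁻¹ = v by group] at h2
    exact hv.2 h2
  have hconjUu : ∀ (g v : Dˣ), ((v : Dˣ) : D) ∈ U → ((g⁻¹ * v * g : Dˣ) : D) ∈ U := by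
    intro g v hv
    refine ⟨hconjSu g v hv.1, ?_⟩
    have h2 := hconjSu g v⁻¹ (by rw [Units.val_inv_eq_inv_val]; exact hv.2)
    have hval : ((g⁻¹ * v⁻¹ * g : Dˣ) : D) = (((g⁻¹ * v * g : Dˣ) : D))⁻¹ := by
      rw [← Units.val_inv_eq_inv_val]
      congr 1
      group
    rw [← hval]
    exact h2
  -- telescoping powers lemma
  have hpow : ∀ (x y : Dˣ), ((x⁻¹ * y : Dˣ) : D) ∈ T →
      ∀ k : ℕ, (((x ^ (k + 1))⁻¹ * y ^ (k + 1) : Dˣ) : D) ∈ T := by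
    intro x y hc k
    induction k with
    | zero => simpa using hc
    | succ k ih =>
      have hgrp : (x ^ (k + 2))⁻¹ * y ^ (k + 2) =
          ((x ^ (k + 1))⁻¹ * y ^ (k + 1)) * ((y ^ (k + 1))⁻¹ * (x⁻¹ * y) * y ^ (k + 1)) := by
        group
      rw [hgrp]
      have h2 : (((y ^ (k + 1))⁻¹ * (x⁻¹ * y) * y ^ (k + 1) : Dˣ) : D) ∈ T :=
        hconjTu (y ^ (k + 1)) _ hc
      have : ((((x ^ (k + 1))⁻¹ * y ^ (k + 1)) * ((y ^ (k + 1))⁻¹ * (x⁻¹ * y) * y ^ (k + 1)) : Dˣ) : D)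
          = (((x ^ (k + 1))⁻¹ * y ^ (k + 1) : Dˣ) : D) * (((y ^ (k + 1))⁻¹ * (x⁻¹ * y) * y ^ (k + 1) : Dˣ) : D) := by
        push_cast; rfl
      rw [this]
      exact hTTmul ih h2
  -- ultrametric sum lemma
  have hsum : ∀ (s : Finset ℕ) (x : Dˣ) (yf : ℕ → Dˣ),
      (∀ j ∈ s, ((x⁻¹ * yf j : Dˣ) : D) ∈ T) →
      ∃ u : Dˣ, ((u : Dˣ) : D) ∈ U ∧ ((x : D) + ∑ j ∈ s, ((yf j : Dˣ) : D)) = ((x * u : Dˣ) : D) := by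
    intro s
    induction s using Finset.cons_induction with
    | empty =>
      intro x yf _
      exact ⟨1, by simpa using hU1, by simp⟩
    | cons a s ha ih =>
      intro x yf h
      obtain ⟨u, hu, hx⟩ := ih x yf (fun j hj => h j (Finset.mem_cons_of_mem hj))
      have hta : ((x⁻¹ * yf a : Dˣ) : D) ∈ T := h a (Finset.mem_cons_self a s)
      set t' : Dˣ := (x * u)⁻¹ * yf a with ht'def
      have ht'T : ((t' : Dˣ) : D) ∈ T := by
        have hgrp : t' = u⁻¹ * (x⁻¹ * yf a) := by rw [ht'def]; group
        have : ((t' : Dˣ) : D) = ((u⁻¹ : Dˣ) : D) * ((x⁻¹ * yf a : Dˣ) : D) := by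
          rw [hgrp]; push_cast; rfl
        rw [this]
        exact hUTmul (by rw [Units.val_inv_eq_inv_val]; exact hUinv hu) hta
      have ht'1U : ((t' : Dˣ) : D) + 1 ∈ U := hT1U ht'T
      have hne : ((t' : Dˣ) : D) + 1 ≠ 0 := hS0 (hUS ht'1U)
      set w : Dˣ := (isUnit_iff_ne_zero.mpr hne).unit with hwdef
      have hwval : ((w : Dˣ) : D) = ((t' : Dˣ) : D) + 1 := by
        rw [hwdef]; exact IsUnit.unit_spec _
      refine ⟨u * w, ?_, ?_⟩
      · have : ((u * w : Dˣ) : D) = ((u : Dˣ) : D) * (((t' : Dˣ) : D) + 1) := by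
          push_cast [hwval]; rfl
        rw [this]
        exact hUmul hu ht'1U
      · rw [Finset.sum_cons]
        have h1 : ((x * (u * w) : Dˣ) : D) = ((x * u : Dˣ) : D) * (((t' : Dˣ) : D) + 1) := by
          push_cast [hwval]; rw [mul_assoc]
        have h2 : ((x * u : Dˣ) : D) * ((t' : Dˣ) : D) = ((yf a : Dˣ) : D) := by
          have : (x * u) * t' = yf a := by rw [ht'def]; group
          rw [← this]; push_cast; rfl
        rw [h1, mul_add, mul_one, h2]
        rw [← add_assoc, add_comm ((x : D)) _, add_assoc, hx, add_comm]
  -- set up the minimal polynomial of n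
  intro g n hn
  set F := Subring.center D with hFdef
  set a : D := (n : D) with hadef
  have hInt : IsIntegral F a := IsIntegral.of_finite F a
  set p := minpoly F a with hpdef
  have hc0 : p.coeff 0 ≠ 0 := minpoly.coeff_zero_ne_zero hInt n.ne_zero
  have hmonic : p.Monic := minpoly.monic hInt
  have hdpos : 0 < p.natDegree := minpoly.natDegree_pos hInt
  have h0mem : 0 ∈ p.support := Polynomial.mem_support_iff.mpr hc0
  have hdmem : p.natDegree ∈ p.support := by
    rw [Polynomial.mem_support_iff, hmonic.coeff_natDegree]
    exact one_ne_zero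
  -- the coefficient units
  set cu : ℕ → Dˣ := fun i =>
    if h : ((p.coeff i : F) : D) = 0 then 1 else (isUnit_iff_ne_zero.mpr h).unit with hcudef
  have hcuval : ∀ i ∈ p.support, ((cu i : Dˣ) : D) = ((p.coeff i : F) : D) := by
    intro i hi
    have hne : ((p.coeff i : F) : D) ≠ 0 := by
      simpa using Polynomial.mem_support_iff.mp hi
    simp only [hcudef, dif_neg hne]
    exact IsUnit.unit_spec _
  have hcucomm : ∀ i (b : D), ((cu i : Dˣ) : D) * b = b * ((cu i : Dˣ) : D) := by
    intro i b
    by_cases h : ((p.coeff i : F) : D) = 0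
    · simp only [hcudef, dif_pos h, Units.val_one, one_mul, mul_one]
    · simp only [hcudef, dif_neg h, IsUnit.unit_spec]
      exact (p.coeff i).2.comm b
  have hcucommu : ∀ i (v : Dˣ), cu i * v = v * cu i := by
    intro i v
    ext
    push_cast
    exact hcucomm i v
  have hcuN : ∀ i, cu i ∈ N := by
    intro i
    apply hF
    by_cases h : ((p.coeff i : F) : D) = 0
    · simp only [hcudef, dif_pos h, Units.val_one]
      exact Set.one_mem_center
    · simp only [hcudef, dif_neg h, IsUnit.unit_spec]
      exact (p.coeff i).2
  set xf : ℕ → Dˣ := fun i => cu i * n ^ i with hxfdef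
  have hxfN : ∀ i, xf i ∈ N := fun i => mul_mem (hcuN i) (pow_mem hn i)
  -- the sum of the values of xf over the support is zero
  have hsum0 : ∑ i ∈ p.support, ((xf i : Dˣ) : D) = 0 := by
    have haev : Polynomial.aeval a p = 0 := minpoly.aeval F a
    rw [Polynomial.aeval_def, Polynomial.eval₂_eq_sum, Polynomial.sum_def] at haev
    rw [← haev]
    apply Finset.sum_congr rfl
    intro i hi
    simp only [hxfdef]
    push_cast
    rw [hcuval i hi]
    rfl
  -- find the minimal index
  have hRtot : ∀ i j, (((xf i)⁻¹ * xf j : Dˣ) : D) ∈ U ∪ T ∨ (((xf j)⁻¹ * xf i : Dˣ) : D) ∈ U ∪ T := by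
    intro i j
    have hmemN : (xf i)⁻¹ * xf j ∈ N := mul_mem (inv_mem (hxfN i)) (hxfN j)
    rcases htri (Stmt18.mem_unitsSet hmemN) with h | h | h
    · exact Or.inl (Or.inl h)
    · exact Or.inl (Or.inr h)
    · refine Or.inr (Or.inr ?_)
      have hval : (((xf j)⁻¹ * xf i : Dˣ) : D) = ((((xf i)⁻¹ * xf j : Dˣ) : D))⁻¹ := by
        rw [← Units.val_inv_eq_inv_val]
        congr 1
      rw [hval]
      exact h
  have hRtrans : ∀ i j k, (((xf i)⁻¹ * xf j : Dˣ) : D) ∈ U ∪ T →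
      (((xf j)⁻¹ * xf k : Dˣ) : D) ∈ U ∪ T → (((xf i)⁻¹ * xf k : Dˣ) : D) ∈ U ∪ T := by
    intro i j k hij hjk
    have heq : (((xf i)⁻¹ * xf k : Dˣ) : D) =
        (((xf i)⁻¹ * xf j : Dˣ) : D) * (((xf j)⁻¹ * xf k : Dˣ) : D) := by
      rw [← Units.val_mul]
      congr 1
      group
    rw [heq]
    exact hUTclosed hij hjk
  obtain ⟨i₀, hi₀, hmin⟩ := Stmt18.exists_min
    (fun i j => (((xf i)⁻¹ * xf j : Dˣ) : D) ∈ U ∪ T) hRtot hRtrans p.support ⟨0, h0mem⟩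
  -- there must be another index with equal value
  have htwice : ∃ j ∈ p.support, j ≠ i₀ ∧ (((xf i₀)⁻¹ * xf j : Dˣ) : D) ∈ U := by
    by_contra hcon
    push_neg at hcon
    have hallT : ∀ j ∈ p.support.erase i₀, (((xf i₀)⁻¹ * xf j : Dˣ) : D) ∈ T := by
      intro j hj
      have hj' := Finset.mem_of_mem_erase hj
      have hjne := Finset.ne_of_mem_erase hj
      rcases hmin j hj' with h | h
      · exact absurd h (hcon j hj' hjne)
      · exact h
    obtain ⟨u, -, heq⟩ := hsum (p.support.erase i₀) (xf i₀) xf hallT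
    have hz : ((xf i₀ : Dˣ) : D) + ∑ j ∈ p.support.erase i₀, ((xf j : Dˣ) : D) = 0 := by
      have h5 := Finset.add_sum_erase p.support (fun j => ((xf j : Dˣ) : D)) hi₀
      exact h5.trans hsum0
    rw [heq] at hz
    exact (xf i₀ * u).ne_zero hz
  obtain ⟨j, hjmem, hjne, hjU⟩ := htwice
  -- commuting helper
  have hA : ∀ i j' : ℕ, ∀ v : Dˣ, ((cu i)⁻¹ * cu j') * v = v * ((cu i)⁻¹ * cu j') := by
    intro i j' v
    have h1 : Commute (cu i) v := hcucommu i v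
    have h2 : Commute (cu j') v := hcucommu j' v
    exact (h1.inv_left.mul_left h2).eq
  -- rearrange: (xf i)⁻¹ * xf j' = (cu i)⁻¹ * cu j' * n ^ (j' - i) when i ≤ j'
  have hrearr : ∀ i j' : ℕ, i ≤ j' →
      (xf i)⁻¹ * xf j' = ((cu i)⁻¹ * cu j') * n ^ (j' - i) := by
    intro i j' hij
    have hp' : n ^ j' = n ^ i * n ^ (j' - i) := by
      rw [← pow_add, Nat.add_sub_cancel' hij]
    calc (xf i)⁻¹ * xf j'
        = (n ^ i)⁻¹ * ((cu i)⁻¹ * cu j') * n ^ j' := by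
          simp only [hxfdef]
          rw [mul_inv_rev]
          group
      _ = ((cu i)⁻¹ * cu j') * ((n ^ i)⁻¹ * n ^ j') := by
          rw [← hA i j' ((n ^ i)⁻¹)]; group
      _ = ((cu i)⁻¹ * cu j') * n ^ (j' - i) := by
          rw [hp']; group
  -- KEY 1 : some power of n is, modulo a central unit, in U
  have key1 : ∃ k : ℕ, 1 ≤ k ∧ ∃ ψ : Dˣ, (∀ v : Dˣ, ψ * v = v * ψ) ∧
      ((ψ * n ^ k : Dˣ) : D) ∈ U := by
    rcases lt_or_gt_of_ne hjne with hlt | hgt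
    · refine ⟨i₀ - j, by omega, (cu j)⁻¹ * cu i₀, hA j i₀, ?_⟩
      have h2 : (((xf j)⁻¹ * xf i₀ : Dˣ) : D) ∈ U := by
        have hval : (((xf j)⁻¹ * xf i₀ : Dˣ) : D) = ((((xf i₀)⁻¹ * xf j : Dˣ) : D))⁻¹ := by
          rw [← Units.val_inv_eq_inv_val]
          congr 1
        rw [hval]
        exact hUinv hjU
      rwa [hrearr j i₀ (le_of_lt hlt)] at h2
    · refine ⟨j - i₀, by omega, (cu i₀)⁻¹ * cu j, hA i₀ j, ?_⟩
      rwa [hrearr i₀ j (le_of_lt hgt)] at hjU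
  obtain ⟨k, hk1, ψ, hψ, hψU⟩ := key1
  -- KEY 2 : conjugates of n are congruent to n modulo U
  have key : ∀ h : Dˣ, ((n⁻¹ * (h * n * h⁻¹) : Dˣ) : D) ∈ U := by
    intro h
    set y : Dˣ := h * n * h⁻¹ with hydef
    have hyN : y ∈ N := (inferInstance : N.Normal).conj_mem n hn h
    have hypow : y ^ k = h * n ^ k * h⁻¹ := by
      rw [hydef]
      have := map_pow (MulAut.conj h) n k
      simpa [MulAut.conj_apply] using this.symm
    have hyk : ψ * y ^ k = h * (ψ * n ^ k) * h⁻¹ := by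
      rw [hypow]
      calc ψ * (h * n ^ k * h⁻¹) = (ψ * h) * n ^ k * h⁻¹ := by group
        _ = (h * ψ) * n ^ k * h⁻¹ := by rw [hψ h]
        _ = h * (ψ * n ^ k) * h⁻¹ := by group
    have hψyU : ((ψ * y ^ k : Dˣ) : D) ∈ U := by
      rw [hyk]
      have hval : ((h * (ψ * n ^ k) * h⁻¹ : Dˣ) : D)
          = (((h⁻¹)⁻¹ * (ψ * n ^ k) * h⁻¹ : Dˣ) : D) := by
        congr 1
      rw [hval]
      exact hconjUu h⁻¹ _ hψU
    have hwU : (((n ^ k)⁻¹ * y ^ k : Dˣ) : D) ∈ U := by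
      have hgrp : (n ^ k)⁻¹ * y ^ k = (ψ * n ^ k)⁻¹ * (ψ * y ^ k) := by group
      rw [hgrp]
      have hval : (((ψ * n ^ k)⁻¹ * (ψ * y ^ k) : Dˣ) : D)
          = (((ψ * n ^ k : Dˣ) : D))⁻¹ * ((ψ * y ^ k : Dˣ) : D) := by
        push_cast; rfl
      rw [hval]
      exact hUmul (hUinv hψU) hψyU
    have hcN : n⁻¹ * y ∈ N := mul_mem (inv_mem hn) hyN
    rcases htri (Stmt18.mem_unitsSet hcN) with hU' | hT' | hT'
    · exact hU'
    · exfalso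
      obtain ⟨k', rfl⟩ : ∃ k', k = k' + 1 := ⟨k - 1, by omega⟩
      exact (hpow n y hT' k').2 (hUS hwU)
    · exfalso
      obtain ⟨k', rfl⟩ : ∃ k', k = k' + 1 := ⟨k - 1, by omega⟩
      have hc' : ((y⁻¹ * n : Dˣ) : D) ∈ T := by
        have hval : ((y⁻¹ * n : Dˣ) : D) = (((n⁻¹ * y : Dˣ) : D))⁻¹ := by
          rw [← Units.val_inv_eq_inv_val]
          congr 1
        rw [hval]
        exact hT'
      have h3 := hpow y n hc' k'
      have h4 : (((y ^ (k' + 1))⁻¹ * n ^ (k' + 1) : Dˣ) : D) ∈ U := by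
        have hval : (((y ^ (k' + 1))⁻¹ * n ^ (k' + 1) : Dˣ) : D)
            = ((((n ^ (k' + 1))⁻¹ * y ^ (k' + 1) : Dˣ) : D))⁻¹ := by
          rw [← Units.val_inv_eq_inv_val]
          congr 1
        rw [hval]
        exact hUinv hwU
      exact h3.2 (hUS h4)
  -- conclude
  have hfin' := key g⁻¹
  rw [inv_inv] at hfin'
  have hinv : ((g⁻¹ * n⁻¹ * g * n : Dˣ) : D) = (((n⁻¹ * (g⁻¹ * n * g) : Dˣ) : D))⁻¹ := by
    rw [← Units.val_inv_eq_inv_val]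
    congr 1
    group
  rw [hinv]
  exact hUinv hfin'
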